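/- Let C be a closed polygonal curve with four vertices p_0, p_1, p_2, p_3 = p_0 in the Euclidean plane forming an isosceles triangle with ‖p_1 − p_0‖ = ‖p_2 − p_0‖ > 0, and suppose the angle θ at p_0 between the vectors p_1 − p_0 and p_2 − p_0 satisfies π/3 < θ < π. Then the limits p*_k = lim_{n→∞} f^n(p_k) exist, p*_0 = p*_3 = p_0, the limit vertices p*_1 and p*_2 lie on the line segment from p_1 to p_2, and p_0, p*_1, p*_2 form a nondegenerate equilateral triangle: ‖p*_1 − p_0‖ = ‖p*_2 − p*_1‖ = ‖p_0 − p*_2‖ > 0. -/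

import Mathlib

open Finset Filter

noncomputable section

/-- The length of the polygonal curve with vertices `p 0, …, p m`
(also the arclength distance from `p 0` to `p m` along the curve). -/
def polyLength {dim : ℕ} (p : ℕ → EuclideanSpace ℝ (Fin dim)) (m : ℕ) : ℝ :=
  ∑ i ∈ Finset.range m, ‖p (i + 1) - p i‖

/-- `P` is the arclength-parameterized linear interpolation of the polygonal
curve with vertices `p 0, …, p m`:
`P ((1-t)·d_{k-1} + t·d_k) = (1-t)·p_{k-1} + t·p_k` for `t ∈ [0,1]`, `k = 1, …, m`,
where `d_k = polyLength p k` is the arclength up to vertex `k`. -/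
def IsArcParam {dim : ℕ} (p : ℕ → EuclideanSpace ℝ (Fin dim)) (m : ℕ)
    (P : ℝ → EuclideanSpace ℝ (Fin dim)) : Prop :=
  ∀ k : ℕ, 1 ≤ k → k ≤ m → ∀ t : ℝ, 0 ≤ t → t ≤ 1 →
    P ((1 - t) * polyLength p (k - 1) + t * polyLength p k)
      = (1 - t) • p (k - 1) + t • p k

/-- The polygonal curve with vertices `p 0, …, p m` is equilateral:
all consecutive interpoint distances agree. -/
def IsEquilateral {dim : ℕ} (p : ℕ → EuclideanSpace ℝ (Fin dim)) (m : ℕ) : Prop :=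
  ∀ k l : ℕ, 1 ≤ k → k ≤ m → 1 ≤ l → l ≤ m →
    ‖p k - p (k - 1)‖ = ‖p l - p (l - 1)‖

/-- `q 0, …, q m` are the vertices of the arclength respacing `f(C)` of the
polygonal curve `C` with vertices `p 0, …, p m`:
`q k = P (k·L(C)/m)` where `P` is the arclength parameterization of `C`;
by convention `f(C) := C` when `L(C) = 0`. -/
def Respaces {dim : ℕ} (m : ℕ) (p q : ℕ → EuclideanSpace ℝ (Fin dim)) : Prop :=
  (polyLength p m = 0 ∧ ∀ k ≤ m, q k = p k) ∨
  (0 < polyLength p m ∧ ∃ P : ℝ → EuclideanSpace ℝ (Fin dim), IsArcParam p m P ∧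
    ∀ k ≤ m, q k = P ((k : ℝ) * polyLength p m / m))

/-! ### Auxiliary real sequence -/

def bSeq (h b0 : ℝ) : ℕ → ℝ
  | 0 => b0
  | n+1 => (2 * Real.sqrt (h^2 + (bSeq h b0 n)^2/4) + bSeq h b0 n) / 3

def bStar (h : ℝ) : ℝ := 2 * h / Real.sqrt 3

lemma bStar_nonneg {h : ℝ} (hh : 0 ≤ h) : 0 ≤ bStar h := by
  unfold bStar; positivity

lemma bStar_pos {h : ℝ} (hh : 0 < h) : 0 < bStar h := by
  unfold bStar; positivity

lemma bStar_sq {h : ℝ} : (bStar h)^2 = 4 * h^2 / 3 := by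
  unfold bStar
  rw [div_pow, Real.sq_sqrt (by norm_num : (3:ℝ) ≥ 0)]
  ring

lemma sqrt_bStar {h : ℝ} (hh : 0 ≤ h) :
    Real.sqrt (h^2 + (bStar h)^2/4) = bStar h := by
  have : h^2 + (bStar h)^2/4 = (bStar h)^2 := by rw [bStar_sq]; ring
  rw [this, Real.sqrt_sq (bStar_nonneg hh)]

lemma bSeq_ge {h b0 : ℝ} (hh : 0 ≤ h) (hb0 : bStar h ≤ b0) :
    ∀ n, bStar h ≤ bSeq h b0 n := by
  intro n
  induction n with
  | zero => exact hb0
  | succ n ih =>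
    show bStar h ≤ (2 * Real.sqrt (h^2 + (bSeq h b0 n)^2/4) + bSeq h b0 n) / 3
    have h1 : bStar h ≤ Real.sqrt (h^2 + (bSeq h b0 n)^2/4) := by
      rw [← sqrt_bStar hh]
      apply Real.sqrt_le_sqrt
      nlinarith [bStar_nonneg hh]
    linarith

lemma bSeq_succ (h b0 : ℝ) (n : ℕ) :
    bSeq h b0 (n+1) = (2 * Real.sqrt (h^2 + (bSeq h b0 n)^2/4) + bSeq h b0 n) / 3 := rfl

lemma sqrt_le_of_ge_bStar {h x : ℝ} (hh : 0 ≤ h) (hx : bStar h ≤ x) :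
    Real.sqrt (h^2 + x^2/4) ≤ x := by
  have hx0 : 0 ≤ x := le_trans (bStar_nonneg hh) hx
  have h1 : Real.sqrt (h^2 + x^2/4) ≤ Real.sqrt (x^2) :=
    Real.sqrt_le_sqrt (by nlinarith [bStar_sq (h := h), bStar_nonneg hh])
  simpa [Real.sqrt_sq hx0] using h1

lemma bSeq_contract {h b0 : ℝ} (hh : 0 ≤ h) (hb0 : bStar h ≤ b0) (n : ℕ) :
    bSeq h b0 (n+1) - bStar h ≤ (2/3) * (bSeq h b0 n - bStar h) := by
  set b := bSeq h b0 n with hb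
  have hbge : bStar h ≤ b := bSeq_ge hh hb0 n
  have hkey : Real.sqrt (h^2 + b^2/4) ≤ (b + bStar h) / 2 := by
    have h2 : 0 ≤ (b + bStar h)/2 := by
      have := bStar_nonneg hh; linarith
    have h3 : Real.sqrt (h^2 + b^2/4) ≤ Real.sqrt (((b + bStar h)/2)^2) :=
      Real.sqrt_le_sqrt (by nlinarith [bStar_sq (h := h), bStar_nonneg hh])
    simpa [Real.sqrt_sq h2] using h3
  show (2 * Real.sqrt (h^2 + b^2/4) + b) / 3 - bStar h ≤ (2/3) * (b - bStar h)
  linarith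

lemma bSeq_tendsto {h b0 : ℝ} (hh : 0 ≤ h) (hb0 : bStar h ≤ b0) :
    Filter.Tendsto (bSeq h b0) Filter.atTop (nhds (bStar h)) := by
  have hbound : ∀ n, bSeq h b0 n - bStar h ≤ (2/3)^n * (b0 - bStar h) := by
    intro n
    induction n with
    | zero => simp [bSeq]
    | succ n ih =>
      calc bSeq h b0 (n+1) - bStar h ≤ (2/3) * (bSeq h b0 n - bStar h) :=
            bSeq_contract hh hb0 n
        _ ≤ (2/3) * ((2/3)^n * (b0 - bStar h)) := by linarith
        _ = (2/3)^(n+1) * (b0 - bStar h) := by ring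
  have h0 : Filter.Tendsto (fun n => bSeq h b0 n - bStar h) Filter.atTop (nhds 0) := by
    apply squeeze_zero (fun n => by linarith [bSeq_ge hh hb0 n]) hbound
    have := tendsto_pow_atTop_nhds_zero_of_lt_one (by norm_num : (0:ℝ) ≤ 2/3)
      (by norm_num : (2:ℝ)/3 < 1)
    simpa using this.mul_const (b0 - bStar h)
  have := h0.add_const (bStar h)
  simpa using this

/-! ### Geometric step -/

abbrev E2 := EuclideanSpace ℝ (Fin 2)

lemma smul_combo (M v : E2) (t s : ℝ) :
    (1-t) • (M - s•v) + t • (M + s•v) = M + ((2*t-1)*s) • v := by module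

lemma norm_sv_sub_w (v w : E2) (hv : ‖v‖ = 1) (hvw : (inner ℝ v w : ℝ) = 0) (s : ℝ) :
    ‖s•v - w‖ = Real.sqrt (‖w‖^2 + s^2) := by
  have h1 : ‖s•v - w‖^2 = ‖w‖^2 + s^2 := by
    rw [norm_sub_sq_real, real_inner_smul_left, hvw, norm_smul, hv]
    simp [sq_abs]
    ring
  rw [← h1, Real.sqrt_sq (norm_nonneg _)]

lemma respace_step (M v w : E2) (hv : ‖v‖ = 1) (hvw : (inner ℝ v w : ℝ) = 0)
    (hw : 0 < ‖w‖) (bn : ℝ) (hbn : bStar ‖w‖ ≤ bn)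
    (p q : ℕ → E2)
    (hp0 : p 0 = M + w) (hp1 : p 1 = M - (bn/2)•v) (hp2 : p 2 = M + (bn/2)•v)
    (hp3 : p 3 = M + w) (hR : Respaces 3 p q) :
    q 0 = M + w ∧
    q 1 = M - (((2*Real.sqrt (‖w‖^2 + bn^2/4) + bn)/3)/2)•v ∧
    q 2 = M + (((2*Real.sqrt (‖w‖^2 + bn^2/4) + bn)/3)/2)•v ∧
    q 3 = M + w := by
  set h := ‖w‖ with hh
  set aa := Real.sqrt (h^2 + bn^2/4) with haa
  have hbnpos : 0 < bn := lt_of_lt_of_le (bStar_pos hw) hbn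
  have haapos : 0 < aa := Real.sqrt_pos.mpr (by positivity)
  have haabn : aa ≤ bn := sqrt_le_of_ge_bStar hw.le hbn
  have n10 : ‖p 1 - p 0‖ = aa := by
    have e : p 1 - p 0 = (-(bn/2))•v - w := by rw [hp1, hp0]; module
    rw [e, norm_sv_sub_w v w hv hvw]
    congr 1; ring
  have n21 : ‖p 2 - p 1‖ = bn := by
    have e : p 2 - p 1 = bn • v := by rw [hp2, hp1]; module
    rw [e, norm_smul, hv, Real.norm_eq_abs, abs_of_pos hbnpos, mul_one]
  have n32 : ‖p 3 - p 2‖ = aa := by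
    have e : p 3 - p 2 = -((bn/2)•v - w) := by rw [hp3, hp2]; module
    rw [e, norm_neg, norm_sv_sub_w v w hv hvw]
    congr 1; ring
  have pl0 : polyLength p 0 = 0 := by simp [polyLength]
  have pl1 : polyLength p 1 = aa := by
    rw [polyLength, Finset.sum_range_one]; norm_num [n10]
  have pl2 : polyLength p 2 = aa + bn := by
    rw [polyLength, Finset.sum_range_succ, Finset.sum_range_one]
    norm_num [n10, n21]
  have pl3 : polyLength p 3 = 2*aa + bn := by
    rw [polyLength, Finset.sum_range_succ, Finset.sum_range_succ,
      Finset.sum_range_one]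
    norm_num [n10, n21, n32]
    ring
  rcases hR with ⟨hL0, _⟩ | ⟨hLpos, P, hP, hq⟩
  · rw [pl3] at hL0; linarith
  · constructor
    · have e0 := hP 1 (by norm_num) (by norm_num) 0 le_rfl zero_le_one
      norm_num [pl0] at e0
      have := hq 0 (by norm_num)
      norm_num at this
      rw [this, e0, hp0]
    constructor
    · set t : ℝ := (bn - aa)/(3*bn) with ht
      have ht0 : 0 ≤ t := by apply div_nonneg <;> linarith
      have ht1 : t ≤ 1 := by
        rw [div_le_one (by linarith)]; linarith
      have e1 := hP 2 (by norm_num) (by norm_num) t ht0 ht1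
      norm_num [pl1, pl2] at e1
      have harg : polyLength p 3 / 3 = (1-t)*aa + t*(aa+bn) := by
        rw [pl3, ht]; field_simp; ring
      have := hq 1 (by norm_num)
      rw [this]
      norm_num
      rw [harg, e1, hp1, hp2, smul_combo]
      have hs : (2*t-1)*(bn/2) = -(((2*aa + bn)/3)/2) := by
        rw [ht]; field_simp; ring
      rw [hs]
      module
    constructor
    · set t : ℝ := ((2*(2*aa+bn)/3) - aa)/bn with ht
      have ht0 : 0 ≤ t := by
        apply div_nonneg _ (le_of_lt hbnpos); linarith
      have ht1 : t ≤ 1 := by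
        rw [div_le_one hbnpos]; linarith
      have e1 := hP 2 (by norm_num) (by norm_num) t ht0 ht1
      norm_num [pl1, pl2] at e1
      have harg : (2:ℝ) * polyLength p 3 / 3 = (1-t)*aa + t*(aa+bn) := by
        rw [pl3, ht]; field_simp; ring
      have := hq 2 (by norm_num)
      rw [this]
      norm_num
      rw [harg, e1, hp1, hp2, smul_combo]
      have hs : (2*t-1)*(bn/2) = ((2*aa + bn)/3)/2 := by
        rw [ht]; field_simp; ring
      rw [hs]
    · have e3 := hP 3 (by norm_num) (by norm_num) 1 zero_le_one le_rfl
      norm_num [pl2, pl3] at e3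
      have := hq 3 (by norm_num)
      rw [this]
      norm_num
      rw [pl3, e3, hp3]

set_option maxHeartbeats 1000000 in
theorem stmt18 (p : ℕ → EuclideanSpace ℝ (Fin 2))
    (hclosed : p 3 = p 0)
    (hiso : ‖p 1 - p 0‖ = ‖p 2 - p 0‖) (hpos : 0 < ‖p 1 - p 0‖)
    (hangle1 : Real.pi / 3 < EuclideanGeometry.angle (p 1) (p 0) (p 2))
    (hangle2 : EuclideanGeometry.angle (p 1) (p 0) (p 2) < Real.pi)
    (c : ℕ → ℕ → EuclideanSpace ℝ (Fin 2))
    (hc0 : ∀ k ≤ 3, c 0 k = p k)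
    (hstep : ∀ n, Respaces 3 (c n) (c (n + 1))) :
    ∃ q : ℕ → EuclideanSpace ℝ (Fin 2),
      (∀ k ≤ 3, Tendsto (fun n => c n k) atTop (nhds (q k))) ∧
      q 0 = p 0 ∧ q 3 = p 0 ∧
      q 1 ∈ segment ℝ (p 1) (p 2) ∧ q 2 ∈ segment ℝ (p 1) (p 2) ∧
      ‖q 1 - p 0‖ = ‖q 2 - q 1‖ ∧ ‖q 2 - q 1‖ = ‖p 0 - q 2‖ ∧
      0 < ‖q 1 - p 0‖ := by
  set θ := EuclideanGeometry.angle (p 1) (p 0) (p 2) with hθ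
  set a := ‖p 1 - p 0‖ with hadef
  set b0 := ‖p 2 - p 1‖ with hb0def
  clear_value θ a b0
  -- law of cosines
  have hb0nn : (0:ℝ) ≤ b0 := hb0def ▸ norm_nonneg _
  have hlaw : b0^2 = 2*a^2*(1 - Real.cos θ) := by
    have h1 := EuclideanGeometry.law_cos (p 1) (p 0) (p 2)
    rw [dist_eq_norm, dist_eq_norm, dist_eq_norm, norm_sub_rev (p 1) (p 2),
      ← hb0def, ← hadef, ← hθ] at h1
    rw [← hiso] at h1
    linear_combination h1
  have hθmem : θ ∈ Set.Icc 0 Real.pi := by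
    rw [hθ]
    exact ⟨EuclideanGeometry.angle_nonneg _ _ _, EuclideanGeometry.angle_le_pi _ _ _⟩
  have hpi : 0 < Real.pi := Real.pi_pos
  have hcos1 : Real.cos θ < 1/2 := by
    have := Real.strictAntiOn_cos (Set.mem_Icc.mpr ⟨by positivity, by linarith⟩)
      hθmem hangle1
    rwa [Real.cos_pi_div_three] at this
  have hcos2 : -1 < Real.cos θ := by
    have := Real.strictAntiOn_cos hθmem (Set.mem_Icc.mpr ⟨hpi.le, le_rfl⟩) hangle2
    rwa [Real.cos_pi] at this
  have hab : a < b0 := by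
    nlinarith [hlaw, hb0nn, mul_pos (mul_pos hpos hpos) (show (0:ℝ) < 1/2 - Real.cos θ by linarith)]
  have hb2a : b0 < 2*a := by
    nlinarith [hlaw, hb0nn, mul_pos (mul_pos hpos hpos) (show (0:ℝ) < 1 + Real.cos θ by linarith)]
  have hb0pos : 0 < b0 := lt_trans hpos hab
  have hb0ne : b0 ≠ 0 := ne_of_gt hb0pos
  -- geometric setup
  set M : E2 := (2⁻¹ : ℝ) • (p 1 + p 2) with hM
  set v : E2 := b0⁻¹ • (p 2 - p 1) with hv
  set w : E2 := p 0 - M with hwdef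
  clear_value M v w
  have hb0v : b0 • v = p 2 - p 1 := by
    rw [hv, smul_inv_smul₀ hb0ne]
  have hvnorm : ‖v‖ = 1 := by
    rw [hv, norm_smul, ← hb0def, norm_inv, Real.norm_eq_abs, abs_of_pos hb0pos]
    field_simp
  have hvw : (inner ℝ v w : ℝ) = 0 := by
    have key0 : (inner ℝ ((p 2 - p 0) + (p 1 - p 0)) ((p 2 - p 0) - (p 1 - p 0)) : ℝ) = 0 := by
      rw [real_inner_add_sub_eq_zero_iff]
      rw [← hadef, ← hiso]
    have e1 : (p 2 - p 0) + (p 1 - p 0) = (-2 : ℝ) • w := by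
      rw [hwdef, hM]; module
    have e2 : (p 2 - p 0) - (p 1 - p 0) = p 2 - p 1 := by module
    rw [e1, e2, real_inner_smul_left] at key0
    have key : (inner ℝ w (p 2 - p 1) : ℝ) = 0 := by linarith
    rw [hv, real_inner_smul_left, real_inner_comm, key, mul_zero]
  have hp0M : p 0 = M + w := by rw [hwdef]; module
  have hp1M : p 1 = M - (b0/2)•v := by
    have : (b0/2)•v = (2⁻¹:ℝ) • (p 2 - p 1) := by
      rw [show (b0/2 : ℝ) = 2⁻¹ * b0 by ring, ← smul_smul, hb0v]
    rw [this, hM]; module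
  have hp2M : p 2 = M + (b0/2)•v := by
    have : (b0/2)•v = (2⁻¹:ℝ) • (p 2 - p 1) := by
      rw [show (b0/2 : ℝ) = 2⁻¹ * b0 by ring, ← smul_smul, hb0v]
    rw [this, hM]; module
  set h := ‖w‖ with hhdef
  clear_value h
  have hPyth : a = Real.sqrt (h^2 + (b0/2)^2) := by
    have e : p 1 - p 0 = (-(b0/2))•v - w := by rw [hp1M, hp0M]; module
    rw [hadef, e, norm_sv_sub_w v w hvnorm hvw]
    rw [← hhdef]
    congr 1; ring
  have hasq : a^2 = h^2 + b0^2/4 := by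
    rw [hPyth, Real.sq_sqrt (by positivity)]; ring
  have hhnn : 0 ≤ h := hhdef ▸ norm_nonneg w
  have hhpos : 0 < h := by
    rcases hhnn.lt_or_eq with h1 | h1
    · exact h1
    · exfalso
      rw [← h1] at hasq
      nlinarith [hasq, hb2a, hb0nn, hpos,
        mul_pos (mul_pos hpos hpos) (show (0:ℝ) < 1 by norm_num)]
  have hbstarb0 : bStar h ≤ b0 := by
    have h1 : (bStar h)^2 ≤ b0^2 := by
      rw [bStar_sq]
      nlinarith [hasq, mul_pos (sub_pos.mpr hab) (show (0:ℝ) < b0 + a by linarith)]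
    nlinarith [bStar_nonneg hhpos.le, hb0nn, sq_nonneg (bStar h - b0), h1]
  -- the invariant
  have inv : ∀ n, c n 0 = M + w ∧ c n 1 = M - ((bSeq h b0 n)/2)•v ∧
      c n 2 = M + ((bSeq h b0 n)/2)•v ∧ c n 3 = M + w := by
    intro n
    induction n with
    | zero =>
      refine ⟨?_, ?_, ?_, ?_⟩
      · rw [hc0 0 (by norm_num), hp0M]
      · rw [hc0 1 (by norm_num), show bSeq h b0 0 = b0 from rfl, hp1M]
      · rw [hc0 2 (by norm_num), show bSeq h b0 0 = b0 from rfl, hp2M]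
      · rw [hc0 3 (by norm_num), hclosed, hp0M]
    | succ n ih =>
      have hr := respace_step M v w hvnorm hvw (hhdef ▸ hhpos) (bSeq h b0 n)
        (hhdef ▸ bSeq_ge hhpos.le hbstarb0 n) (c n) (c (n+1))
        ih.1 ih.2.1 ih.2.2.1 ih.2.2.2 (hstep n)
      rw [← hhdef] at hr
      rw [bSeq_succ]
      exact hr
  -- conclusion
  set B := bStar h with hB
  clear_value B
  have hblim : Tendsto (bSeq h b0) atTop (nhds B) := by
    rw [hB]; exact bSeq_tendsto hhpos.le (hB ▸ hbstarb0)
  have hBpos : 0 < B := by rw [hB]; exact bStar_pos hhpos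
  have harg : h^2 + B^2/4 = B^2 := by rw [hB, bStar_sq]; ring
  refine ⟨fun k => if k = 1 then M - (B/2)•v else if k = 2 then M + (B/2)•v
    else p 0, ?_, by simp, by simp, ?_, ?_, ?_, ?_, ?_⟩
  · intro k hk
    interval_cases k
    · simp only [reduceIte]
      apply Tendsto.congr (fun n => ((inv n).1).symm)
      rw [hp0M]; exact tendsto_const_nhds
    · simp only [reduceIte]
      apply Tendsto.congr (fun n => ((inv n).2.1).symm)
      exact tendsto_const_nhds.sub ((hblim.div_const 2).smul_const v)
    · simp only [reduceIte]
      apply Tendsto.congr (fun n => ((inv n).2.2.1).symm)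
      exact tendsto_const_nhds.add ((hblim.div_const 2).smul_const v)
    · simp only [reduceIte]
      apply Tendsto.congr (fun n => ((inv n).2.2.2).symm)
      rw [hp0M]; exact tendsto_const_nhds
  · -- q 1 ∈ segment
    simp only [reduceIte]
    refine ⟨(b0 + B)/(2*b0), (b0 - B)/(2*b0), by positivity,
      by apply div_nonneg <;> linarith, by field_simp; ring, ?_⟩
    rw [hp1M, hp2M,
      show ((b0 + B)/(2*b0) : ℝ) = 1 - (b0 - B)/(2*b0) by field_simp; ring,
      smul_combo]
    have : (2*((b0 - B)/(2*b0))-1)*(b0/2) = -(B/2) := by field_simp; ring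
    rw [this]; module
  · -- q 2 ∈ segment
    simp only [reduceIte]
    rw [if_neg (by norm_num : ¬(2:ℕ) = 1)]
    refine ⟨(b0 - B)/(2*b0), (b0 + B)/(2*b0),
      by apply div_nonneg <;> linarith, by positivity, by field_simp; ring, ?_⟩
    rw [hp1M, hp2M,
      show ((b0 - B)/(2*b0) : ℝ) = 1 - (b0 + B)/(2*b0) by field_simp; ring,
      smul_combo]
    have : (2*((b0 + B)/(2*b0))-1)*(b0/2) = B/2 := by field_simp; ring
    rw [this]
  · -- ‖q1 - p0‖ = ‖q2 - q1‖
    simp only [reduceIte]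
    rw [if_neg (by norm_num : ¬(2:ℕ) = 1)]
    have e1 : M - (B/2)•v - p 0 = (-(B/2))•v - w := by rw [hp0M]; module
    have e2 : M + (B/2)•v - (M - (B/2)•v) = B • v := by module
    rw [e1, e2, norm_sv_sub_w v w hvnorm hvw, norm_smul, hvnorm,
      Real.norm_eq_abs, abs_of_pos hBpos, mul_one,
      show ‖w‖^2 + (-(B/2))^2 = B^2 by rw [← hhdef, ← harg]; ring,
      Real.sqrt_sq hBpos.le]
  · -- ‖q2 - q1‖ = ‖p0 - q2‖
    simp only [reduceIte]
    rw [if_neg (by norm_num : ¬(2:ℕ) = 1)]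
    have e2 : M + (B/2)•v - (M - (B/2)•v) = B • v := by module
    have e3 : p 0 - (M + (B/2)•v) = -((B/2)•v - w) := by rw [hp0M]; module
    rw [e2, e3, norm_neg, norm_sv_sub_w v w hvnorm hvw, norm_smul, hvnorm,
      Real.norm_eq_abs, abs_of_pos hBpos, mul_one,
      show ‖w‖^2 + (B/2)^2 = B^2 by rw [← hhdef, ← harg]; ring,
      Real.sqrt_sq hBpos.le]
  · -- positivity
    simp only [reduceIte]
    have e1 : M - (B/2)•v - p 0 = (-(B/2))•v - w := by rw [hp0M]; module
    rw [e1, norm_sv_sub_w v w hvnorm hvw,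
      show ‖w‖^2 + (-(B/2))^2 = B^2 by rw [← hhdef, ← harg]; ring,
      Real.sqrt_sq hBpos.le]
    exact hBpos
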